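/- In the random process associated with countNFAcore*, for every state q, realizable history h, admissible t, copy index r, and distinct words w, w' ∈ L(q), letting t* = h(lcps(run(w,q), run(w',q))) be the history value of the last common prefix state of the two derivation runs, we have Pr[w ∈ Y^r_{h,t}(q) and w' ∈ Y^r_{h,t}(q)] ≤ t² / t*. Moreover, with ρ_h(q) = min over predecessors q' of q of h(q'), we have Pr[w ∈ Z^r_h(q) and w' ∈ Z^r_h(q)] ≤ ρ_h(q)² / t*. -/

import Mathlib

/-- A nondeterministic finite automaton over the alphabet `{0,1}` (`Bool`), with a single
initial state, a transition relation, and (via `LinearOrder σ`) a total order `≺` on states. -/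
structure UNFA (σ : Type*) where
  qI : σ
  trans : σ → Bool → σ → Prop

/-- `A.Accepts w q` : there is a run of the word `w` from the initial state ending at `q`.
`L(q) = {w | A.Accepts w q}`. -/
inductive UNFA.Accepts {σ : Type*} (A : UNFA σ) : List Bool → σ → Prop
  | nil : A.Accepts [] A.qI
  | snoc {w : List Bool} {b : Bool} {q' q : σ} :
      A.Accepts w q' → A.trans q' b q → A.Accepts (w ++ [b]) q

/-- The `≺`-first `b`-predecessor of `q` whose language contains `w`
(junk value `qI` if there is none). -/
noncomputable def UNFA.firstPred {σ : Type*} [Fintype σ] [LinearOrder σ]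
    (A : UNFA σ) (q : σ) (b : Bool) (w : List Bool) : σ := by
  classical
  exact if h : (Finset.univ.filter fun q' => A.trans q' b q ∧ A.Accepts w q').Nonempty
    then (Finset.univ.filter fun q' => A.trans q' b q ∧ A.Accepts w q').min' h
    else A.qI

/-- Derivation run computed on the reversed word, listed from `q` back to the initial
state. -/
noncomputable def UNFA.derivRunRev {σ : Type*} [Fintype σ] [LinearOrder σ]
    (A : UNFA σ) : List Bool → σ → List σ
  | [], q => [q]
  | b :: rest, q => q :: A.derivRunRev rest (A.firstPred q b rest.reverse)

/-- The derivation run `run(w,q)` of `w ∈ L(q)`, as the list of its states from the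
initial state (index 0) to `q` (index `w.length`). -/
noncomputable def UNFA.derivRun {σ : Type*} [Fintype σ] [LinearOrder σ]
    (A : UNFA σ) (w : List Bool) (q : σ) : List σ :=
  (A.derivRunRev w.reverse q).reverse

/-- The index `ℓ` of the last common prefix state of two runs `R, R'` (state lists) with
label words `w, w'`: the largest `k ≤ |w|` such that the runs agree on their first `k+1`
states and the words agree on their first `k` symbols. -/
def lcpsLevel {σ : Type*} [DecidableEq σ] (R R' : List σ) (w w' : List Bool) : ℕ :=
  Nat.findGreatest
    (fun k => R.take (k+1) = R'.take (k+1) ∧ w.take k = w'.take k) w.length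


/-- `ρ_h(q) = min(h(q₁),...,h(q_k))` over the predecessors of `q`
(junk value `1` if `q` has no predecessor). -/
noncomputable def UNFA.rhoH {σ : Type*} [Fintype σ] [LinearOrder σ]
    (A : UNFA σ) (h : σ → ℚ) (q : σ) : ℚ := by
  classical
  exact if hne : ((Finset.univ.filter fun q' => ∃ b, A.trans q' b q).image h).Nonempty
    then ((Finset.univ.filter fun q' => ∃ b, A.trans q' b q).image h).min' hne
    else 1

/-- Membership event `w.reverse ∈ Y^r_{h,t}(q)` of the random process, driven by the
independent uniform coins `U (q, w, c)` (`c = false` for the coin of the `reduce` inside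
`Z`, `c = true` for the final `reduce` giving `Y`).  Defined by recursion on the reversed
word. -/
noncomputable def UNFA.memYrev {σ Ω : Type*} [Fintype σ] [LinearOrder σ]
    (A : UNFA σ) (U : σ × List Bool × Bool → Ω → ℝ) (h : σ → ℚ) :
    List Bool → σ → ℚ → Ω → Prop
  | [], q, _t, _ω => q = A.qI
  | b :: rest, q, t, ω =>
      A.memYrev U h rest (A.firstPred q b rest.reverse) (h (A.firstPred q b rest.reverse)) ω ∧
      A.Accepts (b :: rest).reverse q ∧
      U (q, (b :: rest).reverse, false) ω ≤
        ((A.rhoH h q : ℝ) / ((h (A.firstPred q b rest.reverse) : ℝ))) ∧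
      U (q, (b :: rest).reverse, true) ω ≤ ((t : ℝ) / (A.rhoH h q : ℝ))

/-- Membership event `w.reverse ∈ Z^r_h(q)` of the random process. -/
noncomputable def UNFA.memZrev {σ Ω : Type*} [Fintype σ] [LinearOrder σ]
    (A : UNFA σ) (U : σ × List Bool × Bool → Ω → ℝ) (h : σ → ℚ) :
    List Bool → σ → Ω → Prop
  | [], _q, _ω => False
  | b :: rest, q, ω =>
      A.memYrev U h rest (A.firstPred q b rest.reverse) (h (A.firstPred q b rest.reverse)) ω ∧
      A.Accepts (b :: rest).reverse q ∧
      U (q, (b :: rest).reverse, false) ω ≤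
        ((A.rhoH h q : ℝ) / ((h (A.firstPred q b rest.reverse) : ℝ)))

/-- `w ∈ Y^r_{h,t}(q)`. -/
noncomputable def UNFA.memY {σ Ω : Type*} [Fintype σ] [LinearOrder σ]
    (A : UNFA σ) (U : σ × List Bool × Bool → Ω → ℝ) (h : σ → ℚ)
    (w : List Bool) (q : σ) (t : ℚ) (ω : Ω) : Prop :=
  A.memYrev U h w.reverse q t ω

/-- `w ∈ Z^r_h(q)`. -/
noncomputable def UNFA.memZ {σ Ω : Type*} [Fintype σ] [LinearOrder σ]
    (A : UNFA σ) (U : σ × List Bool × Bool → Ω → ℝ) (h : σ → ℚ)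
    (w : List Bool) (q : σ) (ω : Ω) : Prop :=
  A.memZrev U h w.reverse q ω
set_option linter.unusedSectionVars false
section Aux

variable {σ : Type*} [Fintype σ] [LinearOrder σ]

lemma UNFA.accepts_nil {A : UNFA σ} {q : σ} (h : A.Accepts [] q) : q = A.qI := by
  generalize hw : ([] : List Bool) = w0 at h
  cases h with
  | nil => rfl
  | snoc h1 h2 => simp at hw

lemma UNFA.accepts_snoc_inv {A : UNFA σ} {w : List Bool} {b : Bool} {q : σ}
    (h : A.Accepts (w ++ [b]) q) : ∃ q', A.Accepts w q' ∧ A.trans q' b q := by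
  generalize hw : w ++ [b] = w0 at h
  cases h with
  | nil => simp at hw
  | @snoc w1 b1 q1 q2 h1 h2 =>
    obtain ⟨hw1, hb⟩ := List.append_inj hw.symm (by
      have := congrArg List.length hw
      simp at this
      omega)
    obtain rfl := hw1
    have hb' : b1 = b := by simpa using hb
    subst hb'
    exact ⟨q1, h1, h2⟩

lemma UNFA.firstPred_spec {A : UNFA σ} {rest : List Bool} {b : Bool} {q : σ}
    (h : A.Accepts (rest.reverse ++ [b]) q) :
    A.trans (A.firstPred q b rest.reverse) b q ∧
      A.Accepts rest.reverse (A.firstPred q b rest.reverse) := by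
  classical
  obtain ⟨q', h1, h2⟩ := UNFA.accepts_snoc_inv h
  unfold UNFA.firstPred
  split
  · next hne =>
      have hm := Finset.min'_mem _ hne
      rw [Finset.mem_filter] at hm
      exact ⟨hm.2.1, hm.2.2⟩
  · next hne =>
      exact absurd ⟨q', Finset.mem_filter.2 ⟨Finset.mem_univ _, h2, h1⟩⟩ hne

lemma UNFA.lvl_eq {A : UNFA σ} (lvl : σ → ℕ) (hlvl0 : lvl A.qI = 0)
    (hstep : ∀ q' b q, A.trans q' b q → lvl q = lvl q' + 1) :
    ∀ {w : List Bool} {q : σ}, A.Accepts w q → lvl q = w.length := by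
  intro w q h
  induction h with
  | nil => simpa
  | @snoc w1 b1 q1 q2 h1 h2 ih => rw [hstep _ _ _ h2, ih]; simp

lemma UNFA.rhoH_pos {A : UNFA σ} {h : σ → ℚ} (hpos : ∀ q', 0 < h q') (q : σ) :
    0 < A.rhoH h q := by
  classical
  unfold UNFA.rhoH
  split
  · next hne =>
      obtain ⟨q', _, hq'⟩ := Finset.mem_image.1 (Finset.min'_mem _ hne)
      rw [← hq']; exact hpos q'
  · next => norm_num

lemma UNFA.rhoH_le {A : UNFA σ} {h : σ → ℚ} {q' q : σ} {b : Bool} (htr : A.trans q' b q) :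
    A.rhoH h q ≤ h q' := by
  classical
  have hmem : q' ∈ Finset.univ.filter fun p => ∃ c, A.trans p c q :=
    Finset.mem_filter.2 ⟨Finset.mem_univ _, b, htr⟩
  unfold UNFA.rhoH
  split
  · next hne => exact Finset.min'_le _ _ (Finset.mem_image_of_mem h hmem)
  · next hne => exact absurd ⟨h q', Finset.mem_image_of_mem h hmem⟩ hne

lemma UNFA.derivRunRev_length (A : UNFA σ) :
    ∀ (v : List Bool) (q : σ), (A.derivRunRev v q).length = v.length + 1
  | [], q => rfl
  | b :: rest, q => by
      simp [UNFA.derivRunRev, UNFA.derivRunRev_length A rest]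

lemma UNFA.derivRunRev_getD_zero (A : UNFA σ) (v : List Bool) (q : σ) :
    (A.derivRunRev v q).getD 0 A.qI = q := by
  cases v <;> simp [UNFA.derivRunRev]

lemma UNFA.derivRunRev_drop (A : UNFA σ) :
    ∀ (v : List Bool) (k : ℕ), k ≤ v.length → ∀ (q : σ),
    (A.derivRunRev v q).drop k
      = A.derivRunRev (v.drop k) ((A.derivRunRev v q).getD k A.qI) := by
  intro v
  induction v with
  | nil =>
      intro k hk q
      have hk0 : k = 0 := by simpa using hk
      subst hk0
      rw [List.drop_zero, List.drop_zero, UNFA.derivRunRev_getD_zero]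
  | cons b rest ih =>
      intro k hk q
      cases k with
      | zero => rw [List.drop_zero, List.drop_zero, UNFA.derivRunRev_getD_zero]
      | succ k =>
          have hk' : k ≤ rest.length := by simpa using hk
          simp only [UNFA.derivRunRev, List.drop_succ_cons, List.getD_cons_succ,
            List.drop_succ_cons]
          exact ih k hk' _

lemma UNFA.derivRunRev_last (A : UNFA σ) :
    ∀ (v : List Bool) (q : σ), A.Accepts v.reverse q →
    (A.derivRunRev v q).getD v.length A.qI = A.qI
  | [], q, h => by simpa [UNFA.derivRunRev] using UNFA.accepts_nil (by simpa using h)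
  | b :: rest, q, h => by
      have hacc' : A.Accepts (rest.reverse ++ [b]) q := by simpa using h
      have hp := UNFA.firstPred_spec hacc'
      simp only [UNFA.derivRunRev, List.length_cons, List.getD_cons_succ]
      exact UNFA.derivRunRev_last A rest _ hp.2

lemma getD_rev {α : Type*} (l : List α) (d : α) (i : ℕ) (hi : i < l.length) :
    l.reverse.getD i d = l.getD (l.length - 1 - i) d := by
  rw [List.getD_eq_getElem _ _ (by simpa using hi), List.getD_eq_getElem _ _ (by omega)]
  exact List.getElem_reverse _

end Aux
section Aux2

set_option linter.unusedSectionVars false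

variable {σ : Type*} [Fintype σ] [LinearOrder σ]

/-- The list of coin constraints defining the event `w.reverse ∈ Y^r_{h,t}(q)`. -/
noncomputable def UNFA.coinList (A : UNFA σ) (h : σ → ℚ) :
    List Bool → σ → ℚ → List ((σ × List Bool × Bool) × ℝ)
  | [], _, _ => []
  | b :: rest, q, t =>
    ((q, (b :: rest).reverse, true), ((t : ℝ) / (A.rhoH h q : ℝ))) ::
    ((q, (b :: rest).reverse, false),
      ((A.rhoH h q : ℝ) / ((h (A.firstPred q b rest.reverse) : ℝ)))) ::
    UNFA.coinList A h rest (A.firstPred q b rest.reverse)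
      (h (A.firstPred q b rest.reverse))

lemma UNFA.memYrev_iff {Ω : Type*} (A : UNFA σ) (U : σ × List Bool × Bool → Ω → ℝ)
    (h : σ → ℚ) :
    ∀ (v : List Bool) (q : σ) (t : ℚ) (ω : Ω), A.Accepts v.reverse q →
    (A.memYrev U h v q t ω ↔ ∀ pc ∈ UNFA.coinList A h v q t, U pc.1 ω ≤ pc.2)
  | [], q, t, ω, hacc => by
      simp [UNFA.memYrev, UNFA.coinList, UNFA.accepts_nil (by simpa using hacc)]
  | b :: rest, q, t, ω, hacc => by
      have hacc' : A.Accepts (rest.reverse ++ [b]) q := by simpa using hacc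
      have hp := UNFA.firstPred_spec hacc'
      rw [show A.memYrev U h (b :: rest) q t ω =
        (A.memYrev U h rest (A.firstPred q b rest.reverse)
            (h (A.firstPred q b rest.reverse)) ω ∧
          A.Accepts (b :: rest).reverse q ∧
          U (q, (b :: rest).reverse, false) ω ≤
            ((A.rhoH h q : ℝ) / ((h (A.firstPred q b rest.reverse) : ℝ))) ∧
          U (q, (b :: rest).reverse, true) ω ≤ ((t : ℝ) / (A.rhoH h q : ℝ))) from rfl]
      rw [UNFA.memYrev_iff A U h rest _ _ ω hp.2]
      simp only [UNFA.coinList, List.mem_cons, forall_eq_or_imp]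
      constructor
      · rintro ⟨h1, _, h3, h4⟩
        exact ⟨h4, h3, h1⟩
      · rintro ⟨h4, h3, h1⟩
        exact ⟨h1, hacc, h3, h4⟩

lemma UNFA.memZrev_iff {Ω : Type*} (A : UNFA σ) (U : σ × List Bool × Bool → Ω → ℝ)
    (h : σ → ℚ) (b : Bool) (rest : List Bool) (q : σ) (t : ℚ) (ω : Ω)
    (hacc : A.Accepts (b :: rest).reverse q) :
    A.memZrev U h (b :: rest) q ω ↔
      ∀ pc ∈ (UNFA.coinList A h (b :: rest) q t).tail, U pc.1 ω ≤ pc.2 := by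
  have hacc' : A.Accepts (rest.reverse ++ [b]) q := by simpa using hacc
  have hp := UNFA.firstPred_spec hacc'
  rw [show A.memZrev U h (b :: rest) q ω =
    (A.memYrev U h rest (A.firstPred q b rest.reverse)
        (h (A.firstPred q b rest.reverse)) ω ∧
      A.Accepts (b :: rest).reverse q ∧
      U (q, (b :: rest).reverse, false) ω ≤
        ((A.rhoH h q : ℝ) / ((h (A.firstPred q b rest.reverse) : ℝ)))) from rfl]
  rw [UNFA.memYrev_iff A U h rest _ _ ω hp.2]
  simp only [UNFA.coinList, List.tail_cons, List.mem_cons, forall_eq_or_imp]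
  constructor
  · rintro ⟨h1, _, h3⟩
    exact ⟨h3, h1⟩
  · rintro ⟨h3, h1⟩
    exact ⟨h1, hacc, h3⟩

lemma UNFA.coinList_mem (A : UNFA σ) (h : σ → ℚ) :
    ∀ (v : List Bool) (q : σ) (t : ℚ) (pc), pc ∈ UNFA.coinList A h v q t →
    ∃ k, k < v.length ∧ pc.1.2.1 = (v.drop k).reverse ∧
      pc.1.1 = (A.derivRunRev v q).getD k A.qI
  | [], q, t, pc, hm => by simp [UNFA.coinList] at hm
  | b :: rest, q, t, pc, hm => by
      rcases List.mem_cons.1 hm with h1 | hm'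
      · subst h1
        exact ⟨0, by simp, by simp, by simp [UNFA.derivRunRev]⟩
      rcases List.mem_cons.1 hm' with h1 | hm''
      · subst h1
        exact ⟨0, by simp, by simp, by simp [UNFA.derivRunRev]⟩
      · obtain ⟨k, hk, hwd, hs⟩ := UNFA.coinList_mem A h rest _ _ pc hm''
        refine ⟨k + 1, by simpa using hk, by simpa using hwd, ?_⟩
        simpa [UNFA.derivRunRev, List.getD_cons_succ] using hs

lemma UNFA.coinList_wordlen (A : UNFA σ) (h : σ → ℚ) (v : List Bool) (q : σ) (t : ℚ)
    (pc : (σ × List Bool × Bool) × ℝ) (hm : pc ∈ UNFA.coinList A h v q t) :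
    pc.1.2.1.length ≤ v.length := by
  obtain ⟨k, hk, hwd, _⟩ := UNFA.coinList_mem A h v q t pc hm
  rw [hwd]
  simp

lemma UNFA.coinList_nodup (A : UNFA σ) (h : σ → ℚ) :
    ∀ (v : List Bool) (q : σ) (t : ℚ), ((UNFA.coinList A h v q t).map Prod.fst).Nodup
  | [], _, _ => by simp [UNFA.coinList]
  | b :: rest, q, t => by
      have hlen : ∀ pc ∈ UNFA.coinList A h rest (A.firstPred q b rest.reverse)
          (h (A.firstPred q b rest.reverse)), pc.1.2.1.length ≤ rest.length :=
        fun pc hpc => UNFA.coinList_wordlen A h rest _ _ pc hpc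
      simp only [UNFA.coinList, List.map_cons, List.nodup_cons]
      refine ⟨?_, ?_, UNFA.coinList_nodup A h rest _ _⟩
      · intro hmem
        rcases List.mem_cons.1 hmem with he | hmem
        · simp at he
        · obtain ⟨pc, hpc, hfst⟩ := List.mem_map.1 hmem
          have := hlen pc hpc
          rw [hfst] at this
          simp at this
      · intro hmem
        obtain ⟨pc, hpc, hfst⟩ := List.mem_map.1 hmem
        have := hlen pc hpc
        rw [hfst] at this
        simp at this

set_option maxHeartbeats 400000 in
lemma UNFA.coinList_bounds (A : UNFA σ) (h : σ → ℚ) (lvl : σ → ℕ) (hlvl0 : lvl A.qI = 0)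
    (hstep : ∀ q' b q, A.trans q' b q → lvl q = lvl q' + 1)
    (hpos : ∀ q', 0 < h q') (hle : ∀ q', q' ≠ A.qI → h q' ≤ A.rhoH h q') :
    ∀ (v : List Bool) (q : σ) (t : ℚ), A.Accepts v.reverse q → 0 < t → t ≤ A.rhoH h q →
    ∀ pc ∈ UNFA.coinList A h v q t, 0 ≤ pc.2 ∧ pc.2 ≤ 1
  | [], _, _, _, _, _ => by simp [UNFA.coinList]
  | b :: rest, q, t, hacc, ht0, htle => by
      have hacc' : A.Accepts (rest.reverse ++ [b]) q := by simpa using hacc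
      have hp := UNFA.firstPred_spec hacc'
      have hρq : (0:ℝ) < (A.rhoH h q : ℝ) := by
        exact_mod_cast UNFA.rhoH_pos hpos q
      have hρle : (A.rhoH h q : ℝ) ≤ (h (A.firstPred q b rest.reverse) : ℝ) := by
        exact_mod_cast UNFA.rhoH_le (h := h) hp.1
      have hhp : (0:ℝ) < (h (A.firstPred q b rest.reverse) : ℝ) := by
        exact_mod_cast hpos (A.firstPred q b rest.reverse)
      intro pc hm
      rcases List.mem_cons.1 hm with h1 | hm'
      · subst h1
        constructor
        · positivity
        · rw [div_le_one hρq]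
          exact_mod_cast htle
      rcases List.mem_cons.1 hm' with h1 | hm''
      · subst h1
        constructor
        · positivity
        · rw [div_le_one hhp]
          exact hρle
      · cases rest with
        | nil => simp [UNFA.coinList] at hm''
        | cons b' rest' =>
            have hpne : A.firstPred q b (b' :: rest').reverse ≠ A.qI := by
              intro he
              have hl := UNFA.lvl_eq lvl hlvl0 hstep hp.2
              rw [he, hlvl0] at hl
              simp at hl
            exact UNFA.coinList_bounds A h lvl hlvl0 hstep hpos hle (b' :: rest') _ _
              hp.2 (hpos _) (hle _ hpne) pc hm''

end Aux2
section Aux3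

set_option linter.unusedSectionVars false

variable {σ : Type*} [Fintype σ] [LinearOrder σ]

lemma UNFA.coinList_prod (A : UNFA σ) (h : σ → ℚ) (hpos : ∀ q', 0 < h q') :
    ∀ (v : List Bool) (q : σ) (t : ℚ), 0 ≤ t → (v = [] → t = h q) →
    ((UNFA.coinList A h v q t).map fun pc => ENNReal.ofReal pc.2).prod
      = ENNReal.ofReal ((t : ℝ) / (h ((A.derivRunRev v q).getD v.length A.qI) : ℝ))
  | [], q, t, _, hv => by
      have h0 : ((h q : ℝ)) ≠ 0 := by
        have : (0:ℝ) < (h q : ℝ) := by exact_mod_cast hpos q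
        exact this.ne'
      simp [UNFA.coinList, UNFA.derivRunRev, hv rfl, div_self h0]
  | b :: rest, q, t, ht, _ => by
      have hρ : (0:ℝ) < (A.rhoH h q : ℝ) := by exact_mod_cast UNFA.rhoH_pos hpos q
      have hhp : (0:ℝ) < (h (A.firstPred q b rest.reverse) : ℝ) := by
        exact_mod_cast hpos (A.firstPred q b rest.reverse)
      have hL : (0:ℝ) <
          (h ((A.derivRunRev rest (A.firstPred q b rest.reverse)).getD rest.length A.qI) : ℝ) := by
        exact_mod_cast hpos _
      have hgetD : (A.derivRunRev (b :: rest) q).getD (b :: rest).length A.qI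
          = (A.derivRunRev rest (A.firstPred q b rest.reverse)).getD rest.length A.qI := by
        simp [UNFA.derivRunRev, List.getD_cons_succ]
      rw [show UNFA.coinList A h (b :: rest) q t =
        ((q, (b :: rest).reverse, true), ((t : ℝ) / (A.rhoH h q : ℝ))) ::
        ((q, (b :: rest).reverse, false),
          ((A.rhoH h q : ℝ) / ((h (A.firstPred q b rest.reverse) : ℝ)))) ::
        UNFA.coinList A h rest (A.firstPred q b rest.reverse)
          (h (A.firstPred q b rest.reverse)) from rfl]
      simp only [List.map_cons, List.prod_cons]
      rw [UNFA.coinList_prod A h hpos rest _ _ (hpos _).le (fun _ => rfl)]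
      rw [hgetD, ← ENNReal.ofReal_mul (div_nonneg hρ.le hhp.le),
        ← ENNReal.ofReal_mul (div_nonneg (by exact_mod_cast ht) hρ.le)]
      congr 1
      field_simp

lemma UNFA.coinList_decomp (A : UNFA σ) (h : σ → ℚ) (hpos : ∀ q', 0 < h q') :
    ∀ (d u : List Bool), d ≠ [] → ∀ (q : σ) (t : ℚ),
    ∃ g : List ((σ × List Bool × Bool) × ℝ),
      UNFA.coinList A h (d ++ u) q t
        = ((q, (d ++ u).reverse, true), ((t : ℝ) / (A.rhoH h q : ℝ))) :: (g ++
            UNFA.coinList A h u ((A.derivRunRev (d ++ u) q).getD d.length A.qI)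
              (h ((A.derivRunRev (d ++ u) q).getD d.length A.qI))) ∧
      (∀ pc ∈ g, u.length < pc.1.2.1.length) ∧
      (g.map fun pc => ENNReal.ofReal pc.2).prod
        = ENNReal.ofReal ((A.rhoH h q : ℝ) /
            (h ((A.derivRunRev (d ++ u) q).getD d.length A.qI) : ℝ))
  | [], _, hd, _, _ => absurd rfl hd
  | [b], u, _, q, t => by
      have hgetD : (A.derivRunRev ([b] ++ u) q).getD 1 A.qI
          = A.firstPred q b u.reverse := by
        rw [show ([b] ++ u : List Bool) = b :: u from rfl]
        simp only [UNFA.derivRunRev, List.getD_cons_succ]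
        exact UNFA.derivRunRev_getD_zero A u _
      refine ⟨[((q, ([b] ++ u).reverse, false),
        ((A.rhoH h q : ℝ) / ((h (A.firstPred q b u.reverse) : ℝ))))], ?_, ?_, ?_⟩
      · rw [show (([b] ++ u : List Bool)) = b :: u from rfl]
        rw [show UNFA.coinList A h (b :: u) q t =
          ((q, (b :: u).reverse, true), ((t : ℝ) / (A.rhoH h q : ℝ))) ::
          ((q, (b :: u).reverse, false),
            ((A.rhoH h q : ℝ) / ((h (A.firstPred q b u.reverse) : ℝ)))) ::
          UNFA.coinList A h u (A.firstPred q b u.reverse)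
            (h (A.firstPred q b u.reverse)) from rfl]
        rw [show ((A.derivRunRev (b :: u) q).getD (List.length [b]) A.qI)
          = A.firstPred q b u.reverse from hgetD]
        rfl
      · intro pc hpc
        rw [List.mem_singleton] at hpc
        subst hpc
        simp
      · have hlen1 : ([b] : List Bool).length = 1 := rfl
        rw [hlen1, hgetD]
        simp
  | b :: b' :: d', u, _, q, t => by
      set p₁ := A.firstPred q b ((b' :: d') ++ u).reverse with hp₁
      obtain ⟨g₁, hE₁, hlen₁, hprod₁⟩ :=
        UNFA.coinList_decomp A h hpos (b' :: d') u (by simp) p₁ (h p₁)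
      have hgetD : ∀ m : ℕ, (A.derivRunRev ((b :: b' :: d') ++ u) q).getD (m + 1) A.qI
          = (A.derivRunRev ((b' :: d') ++ u) p₁).getD m A.qI := by
        intro m
        rw [show ((b :: b' :: d') ++ u : List Bool) = b :: ((b' :: d') ++ u) from rfl]
        simp only [UNFA.derivRunRev, List.getD_cons_succ]
        rfl
      have hρq : (0:ℝ) < (A.rhoH h q : ℝ) := by exact_mod_cast UNFA.rhoH_pos hpos q
      have hρp₁ : (0:ℝ) < (A.rhoH h p₁ : ℝ) := by exact_mod_cast UNFA.rhoH_pos hpos p₁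
      have hhp₁ : (0:ℝ) < (h p₁ : ℝ) := by exact_mod_cast hpos p₁
      have hhP : (0:ℝ) <
          (h ((A.derivRunRev ((b' :: d') ++ u) p₁).getD (b' :: d').length A.qI) : ℝ) := by
        exact_mod_cast hpos _
      refine ⟨((q, ((b :: b' :: d') ++ u).reverse, false), ((A.rhoH h q : ℝ) / ((h p₁ : ℝ)))) ::
        ((p₁, ((b' :: d') ++ u).reverse, true), ((h p₁ : ℝ) / (A.rhoH h p₁ : ℝ))) :: g₁,
        ?_, ?_, ?_⟩
      · rw [show ((b :: b' :: d') ++ u : List Bool) = b :: ((b' :: d') ++ u) from rfl]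
        rw [show UNFA.coinList A h (b :: ((b' :: d') ++ u)) q t =
          ((q, (b :: ((b' :: d') ++ u)).reverse, true), ((t : ℝ) / (A.rhoH h q : ℝ))) ::
          ((q, (b :: ((b' :: d') ++ u)).reverse, false),
            ((A.rhoH h q : ℝ) / ((h p₁ : ℝ)))) ::
          UNFA.coinList A h ((b' :: d') ++ u) p₁ (h p₁) from rfl]
        rw [hE₁]
        have hg : (A.derivRunRev (b :: ((b' :: d') ++ u)) q).getD ((b :: b' :: d').length) A.qI
            = (A.derivRunRev ((b' :: d') ++ u) p₁).getD ((b' :: d').length) A.qI := by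
          exact hgetD _
        rw [show ((b :: ((b' :: d') ++ u) : List Bool)) = ((b :: b' :: d') ++ u) from rfl] at hg ⊢
        rw [hg]
        rfl
      · intro pc hpc
        rcases List.mem_cons.1 hpc with h1 | hpc
        · subst h1; simp
        rcases List.mem_cons.1 hpc with h1 | hpc
        · subst h1; simp
        · exact hlen₁ pc hpc
      · simp only [List.map_cons, List.prod_cons]
        have hlen2 : (b :: b' :: d').length = (b' :: d').length + 1 := rfl
        rw [hprod₁, hlen2, hgetD]
        rw [← ENNReal.ofReal_mul (div_nonneg hhp₁.le hρp₁.le),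
          ← ENNReal.ofReal_mul (div_nonneg hρq.le hhp₁.le)]
        congr 1
        field_simp

end Aux3
section Aux4

open MeasureTheory ProbabilityTheory

set_option linter.unusedSectionVars false

variable {σ : Type*} [Fintype σ] [LinearOrder σ]

lemma meas_coinEvent {Ω : Type*} [MeasurableSpace Ω] (μ : Measure Ω)
    (U : σ × List Bool × Bool → Ω → ℝ)
    (hUindep : iIndepFun U μ)
    (hUunif : ∀ i c, 0 ≤ c → c ≤ 1 → μ {ω | U i ω ≤ c} = ENNReal.ofReal c)
    (L : List ((σ × List Bool × Bool) × ℝ))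
    (hnd : (L.map Prod.fst).Nodup) (hb : ∀ pc ∈ L, 0 ≤ pc.2 ∧ pc.2 ≤ 1) :
    μ {ω | ∀ pc ∈ L, U pc.1 ω ≤ pc.2} = (L.map fun pc => ENNReal.ofReal pc.2).prod := by
  classical
  set c : σ × List Bool × Bool → ℝ := fun i =>
    if hx : ∃ pc ∈ L, pc.1 = i then hx.choose.2 else 0 with hc
  have hcval : ∀ pc ∈ L, c pc.1 = pc.2 := by
    intro pc hpc
    have hx : ∃ pc' ∈ L, pc'.1 = pc.1 := ⟨pc, hpc, rfl⟩
    rw [hc]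
    simp only
    rw [dif_pos hx]
    obtain ⟨hmem, heq⟩ := hx.choose_spec
    have := List.inj_on_of_nodup_map hnd hmem hpc heq
    rw [this]
  set S := (L.map Prod.fst).toFinset with hS
  have hsets : {ω | ∀ pc ∈ L, U pc.1 ω ≤ pc.2} = ⋂ i ∈ S, U i ⁻¹' Set.Iic (c i) := by
    ext ω
    simp only [Set.mem_setOf_eq, Set.mem_iInter, Set.mem_preimage, Set.mem_Iic, hS,
      List.mem_toFinset, List.mem_map]
    constructor
    · rintro H i ⟨pc, hpc, rfl⟩
      rw [hcval pc hpc]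
      exact H pc hpc
    · intro H pc hpc
      have := H pc.1 ⟨pc, hpc, rfl⟩
      rwa [hcval pc hpc] at this
  rw [hsets, hUindep.meas_biInter (fun i _ => ⟨Set.Iic (c i), measurableSet_Iic, rfl⟩)]
  have hci : ∀ i ∈ S, μ (U i ⁻¹' Set.Iic (c i)) = ENNReal.ofReal (c i) := by
    intro i hi
    rw [hS, List.mem_toFinset, List.mem_map] at hi
    obtain ⟨pc, hpc, rfl⟩ := hi
    rw [hcval pc hpc]
    exact hUunif pc.1 pc.2 (hb pc hpc).1 (hb pc hpc).2
  rw [Finset.prod_congr rfl hci, hS, List.prod_toFinset _ hnd, List.map_map]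
  exact congrArg List.prod
    (List.map_congr_left fun pc hpc => by simp [Function.comp, hcval pc hpc])

end Aux4
section Aux5

set_option linter.unusedSectionVars false

variable {σ : Type*} [Fintype σ] [LinearOrder σ]

lemma getD_take' {α : Type*} (l : List α) (d : α) (i k : ℕ) (h : i < k) :
    (l.take k).getD i d = l.getD i d := by
  rw [List.getD_eq_getElem?_getD, List.getD_eq_getElem?_getD, List.getElem?_take, if_pos h]

lemma drop_pred' {α : Type*} (l : List α) (d : α) (k : ℕ) (hk : l.length = k + 1) :
    l.drop k = [l.getD k d] := by
  rw [List.drop_eq_getElem_cons (by omega)]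
  rw [List.drop_eq_nil_of_le (by omega), List.getD_eq_getElem _ _ (by omega)]

lemma rev_drop_rev {α : Type*} (l : List α) (k : ℕ) (hk : k ≤ l.length) :
    (l.reverse.drop k).reverse = l.take (l.length - k) := by
  apply List.reverse_injective
  simp only [List.reverse_reverse]
  rw [List.reverse_take]
  congr 1
  omega

lemma UNFA.derivRun_take_one (A : UNFA σ) (w : List Bool) (q : σ) (hacc : A.Accepts w q) :
    (A.derivRun w q).take 1 = [A.qI] := by
  have hlast : (A.derivRunRev w.reverse q).getD w.reverse.length A.qI = A.qI :=
    UNFA.derivRunRev_last A _ q (by simpa using hacc)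
  have hlen := UNFA.derivRunRev_length A w.reverse q
  unfold UNFA.derivRun
  rw [show (1:ℕ) = (A.derivRunRev w.reverse q).length - w.reverse.length from by
    rw [hlen]; omega]
  rw [← List.reverse_drop]
  rw [drop_pred' _ A.qI _ (by rw [hlen])]
  rw [hlast]
  rfl

lemma UNFA.take_run_eq (A : UNFA σ) {w w' : List Bool} {q : σ} (j : ℕ)
    (hjw : j ≤ w.length) (hlen : w'.length = w.length)
    (hword : w.take j = w'.take j)
    (hstate : (A.derivRun w q).getD j A.qI = (A.derivRun w' q).getD j A.qI) :
    (A.derivRun w q).take (j+1) = (A.derivRun w' q).take (j+1) := by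
  have e1 : ∀ (v : List Bool), v.length = w.length → (A.derivRun v q).take (j+1)
      = ((A.derivRunRev v.reverse q).drop (w.length - j)).reverse := by
    intro v hv
    unfold UNFA.derivRun
    rw [List.reverse_drop]
    congr 1
    rw [UNFA.derivRunRev_length, List.length_reverse, hv]
    omega
  have hsgen : ∀ (v : List Bool), v.length = w.length →
      (A.derivRunRev v.reverse q).getD (w.length - j) A.qI = (A.derivRun v q).getD j A.qI := by
    intro v hv
    unfold UNFA.derivRun
    rw [getD_rev _ _ j (by rw [UNFA.derivRunRev_length, List.length_reverse, hv]; omega)]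
    congr 1
    rw [UNFA.derivRunRev_length, List.length_reverse, hv]
    omega
  have hwr : w.reverse.drop (w.length - j) = w'.reverse.drop (w.length - j) := by
    apply List.reverse_injective
    rw [rev_drop_rev _ _ (by omega), rev_drop_rev _ _ (by rw [hlen]; omega), hlen]
    rw [show w.length - (w.length - j) = j from by omega]
    exact hword
  rw [e1 w rfl, e1 w' hlen]
  rw [A.derivRunRev_drop w.reverse (w.length - j) (by simp) q,
    A.derivRunRev_drop w'.reverse (w.length - j) (by simp [hlen]) q]
  rw [hwr, hsgen w rfl, hsgen w' hlen, hstate]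

end Aux5
open MeasureTheory ProbabilityTheory

/-- Second-order probabilities in the random process: for distinct `w, w' ∈ L(q)` and
`t* = h(lcps(run(w,q), run(w',q)))`,
`Pr[w ∈ Y^r_{h,t}(q) ∧ w' ∈ Y^r_{h,t}(q)] ≤ t²/t*`, and with `ρ_h(q)` the minimum of `h`
over the predecessors of `q`, `Pr[w ∈ Z^r_h(q) ∧ w' ∈ Z^r_h(q)] ≤ ρ_h(q)²/t*`. -/
theorem stmt_4 {σ Ω : Type*} [Fintype σ] [LinearOrder σ] [MeasurableSpace Ω]
    (μ : Measure Ω) [IsProbabilityMeasure μ] (A : UNFA σ)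
    (lvl : σ → ℕ) (hlvl0 : lvl A.qI = 0)
    (hlvlstep : ∀ q' b q, A.trans q' b q → lvl q = lvl q' + 1)
    (U : σ × List Bool × Bool → Ω → ℝ)
    (hUm : ∀ i, Measurable (U i))
    (hUindep : iIndepFun U μ)
    (hUunif : ∀ i c, 0 ≤ c → c ≤ 1 → μ {ω | U i ω ≤ c} = ENNReal.ofReal c)
    (h : σ → ℚ) (hpos : ∀ q', 0 < h q') (hI : h A.qI = 1)
    (hle : ∀ q', q' ≠ A.qI → h q' ≤ A.rhoH h q')
    (q : σ) (t : ℚ) (ht0 : 0 < t) (htle : t ≤ A.rhoH h q) (htI : q = A.qI → t = 1)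
    (w w' : List Bool) (hw : A.Accepts w q) (hw' : A.Accepts w' q) (hne : w ≠ w') :
    μ ({ω | A.memY U h w q t ω} ∩ {ω | A.memY U h w' q t ω}) ≤
      ENNReal.ofReal ((t : ℝ)^2 /
        ((h ((A.derivRun w q).getD
          (lcpsLevel (A.derivRun w q) (A.derivRun w' q) w w') A.qI) : ℝ))) ∧
    μ ({ω | A.memZ U h w q ω} ∩ {ω | A.memZ U h w' q ω}) ≤
      ENNReal.ofReal ((A.rhoH h q : ℝ)^2 /
        ((h ((A.derivRun w q).getD
          (lcpsLevel (A.derivRun w q) (A.derivRun w' q) w w') A.qI) : ℝ))) := by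
  classical
  have hlq : lvl q = w.length := UNFA.lvl_eq lvl hlvl0 hlvlstep hw
  have hlen' : w'.length = w.length := by
    rw [← UNFA.lvl_eq lvl hlvl0 hlvlstep hw', hlq]
  have hn1 : 1 ≤ w.length := by
    rcases Nat.eq_zero_or_pos w.length with h0 | h1
    · exfalso
      apply hne
      rw [List.length_eq_zero_iff.1 h0, List.length_eq_zero_iff.1 (hlen'.trans h0)]
    · exact h1
  set n := w.length with hn
  set R := A.derivRun w q with hR
  set R' := A.derivRun w' q with hR'
  set L := lcpsLevel R R' w w' with hLdef
  have hRlen : R.length = n + 1 := by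
    rw [hR]
    unfold UNFA.derivRun
    rw [List.length_reverse, UNFA.derivRunRev_length, List.length_reverse]
  have hRlen' : R'.length = n + 1 := by
    rw [hR']
    unfold UNFA.derivRun
    rw [List.length_reverse, UNFA.derivRunRev_length, List.length_reverse, hlen']
  have hP0 : R.take (0+1) = R'.take (0+1) ∧ w.take 0 = w'.take 0 := by
    constructor
    · rw [hR, hR', UNFA.derivRun_take_one A w q hw, UNFA.derivRun_take_one A w' q hw']
    · simp
  have hPL : R.take (L+1) = R'.take (L+1) ∧ w.take L = w'.take L := by
    rw [hLdef]
    unfold lcpsLevel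
    exact Nat.findGreatest_spec
      (P := fun k => R.take (k+1) = R'.take (k+1) ∧ w.take k = w'.take k)
      (Nat.zero_le _) hP0
  have hLle : L ≤ n := by
    have hx : L ≤ w.length := by
      rw [hLdef]
      unfold lcpsLevel
      exact Nat.findGreatest_le _
    omega
  have hmax : ∀ j, j ≤ n → (R.take (j+1) = R'.take (j+1) ∧ w.take j = w'.take j) → j ≤ L := by
    intro j hj hPj
    rw [hLdef]
    unfold lcpsLevel
    exact Nat.le_findGreatest (by omega) hPj
  have hLlt : L < n := by
    rcases Nat.lt_or_ge L n with hlt | hge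
    · exact hlt
    · exfalso
      have hLn : L = n := le_antisymm hLle hge
      apply hne
      have hx := hPL.2
      rw [hLn] at hx
      have e1 : w.take n = w := by rw [hn]; exact List.take_length
      have e2 : w'.take n = w' := by rw [← hlen']; exact List.take_length
      rw [← e1, ← e2]
      exact hx
  set sσ := R.getD L A.qI with hsσ
  have hstateL : R.getD L A.qI = R'.getD L A.qI := by
    rw [← getD_take' R A.qI L (L+1) (Nat.lt_succ_self _),
        ← getD_take' R' A.qI L (L+1) (Nat.lt_succ_self _), hPL.1]
  have hdu : w.reverse.take (n - L) ++ w.reverse.drop (n - L) = w.reverse :=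
    List.take_append_drop _ _
  have hdu' : w'.reverse.take (n - L) ++ w'.reverse.drop (n - L) = w'.reverse :=
    List.take_append_drop _ _
  have hdlen : (w.reverse.take (n - L)).length = n - L := by
    rw [List.length_take, List.length_reverse]
    omega
  have hdlen' : (w'.reverse.take (n - L)).length = n - L := by
    rw [List.length_take, List.length_reverse, hlen']
    omega
  have hdne : w.reverse.take (n - L) ≠ [] := by
    intro hnil
    have := congrArg List.length hnil
    rw [hdlen] at this
    simp at this
    omega
  have hdne' : w'.reverse.take (n - L) ≠ [] := by
    intro hnil
    have := congrArg List.length hnil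
    rw [hdlen'] at this
    simp at this
    omega
  have hu : w.reverse.drop (n - L) = (w.take L).reverse := by
    rw [List.reverse_take, hn]
  have hu' : w'.reverse.drop (n - L) = (w.take L).reverse := by
    rw [hPL.2, List.reverse_take, hlen']
  have hgd : (A.derivRunRev w.reverse q).getD (n - L) A.qI = sσ := by
    rw [hsσ, hR]
    unfold UNFA.derivRun
    rw [getD_rev _ _ L (by rw [UNFA.derivRunRev_length, List.length_reverse]; omega)]
    congr 1
    rw [UNFA.derivRunRev_length, List.length_reverse]
    omega
  have hgd' : (A.derivRunRev w'.reverse q).getD (n - L) A.qI = sσ := by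
    rw [hsσ, hstateL, hR']
    unfold UNFA.derivRun
    rw [getD_rev _ _ L (by rw [UNFA.derivRunRev_length, List.length_reverse, hlen']; omega)]
    congr 1
    rw [UNFA.derivRunRev_length, List.length_reverse, hlen']
    omega
  obtain ⟨g, hgE, hglen, hgprod⟩ := UNFA.coinList_decomp A h hpos
    (w.reverse.take (n - L)) (w.reverse.drop (n - L)) hdne q t
  rw [hdu, hdlen, hgd] at hgE
  rw [List.reverse_reverse] at hgE
  obtain ⟨g', hgE', hglen', hgprod'⟩ := UNFA.coinList_decomp A h hpos
    (w'.reverse.take (n - L)) (w'.reverse.drop (n - L)) hdne' q t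
  rw [hdu', hdlen', hgd'] at hgE' hgprod'
  rw [List.reverse_reverse] at hgE'
  rw [hu, ← hu'] at hgE
  have hulen : (w'.reverse.drop (n - L)).length = L := by
    rw [hu']
    rw [List.length_reverse, List.length_take]
    omega
  have hglenL : ∀ pc ∈ g', L < pc.1.2.1.length := by
    intro pc hpc
    have := hglen' pc hpc
    rwa [hulen] at this
  -- coin events for Y
  have hEw : {ω | A.memY U h w q t ω}
      = {ω | ∀ pc ∈ UNFA.coinList A h w.reverse q t, U pc.1 ω ≤ pc.2} := by
    ext ω
    simp only [Set.mem_setOf_eq]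
    exact UNFA.memYrev_iff A U h w.reverse q t ω (by simpa using hw)
  have hEw' : {ω | A.memY U h w' q t ω}
      = {ω | ∀ pc ∈ UNFA.coinList A h w'.reverse q t, U pc.1 ω ≤ pc.2} := by
    ext ω
    simp only [Set.mem_setOf_eq]
    exact UNFA.memYrev_iff A U h w'.reverse q t ω (by simpa using hw')
  have hmemg' : ∀ pc, pc ∈ ((q, w', true), ((t : ℝ) / (A.rhoH h q : ℝ))) :: g' →
      pc ∈ UNFA.coinList A h w'.reverse q t := by
    intro pc hpc
    rw [hgE']
    rcases List.mem_cons.1 hpc with rfl | hpc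
    · exact List.mem_cons_self
    · exact List.mem_cons_of_mem _ (List.mem_append_left _ hpc)
  have hlenTC : ∀ pc, pc ∈ ((q, w', true), ((t : ℝ) / (A.rhoH h q : ℝ))) :: g' →
      L < pc.1.2.1.length := by
    intro pc hpc
    rcases List.mem_cons.1 hpc with rfl | hpc
    · simpa [hlen'] using hLlt
    · exact hglenL pc hpc
  -- cross disjointness
  have hdisj : ((UNFA.coinList A h w.reverse q t).map Prod.fst).Disjoint
      (((((q, w', true), ((t : ℝ) / (A.rhoH h q : ℝ))) :: g')).map Prod.fst) := by
    intro x hx1 hx2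
    obtain ⟨pc, hpc, rfl⟩ := List.mem_map.1 hx1
    obtain ⟨pc', hpc', hfst⟩ := List.mem_map.1 hx2
    obtain ⟨k, hk, hwd, hst⟩ := UNFA.coinList_mem A h w.reverse q t pc hpc
    obtain ⟨k', hk', hwd', hst'⟩ := UNFA.coinList_mem A h w'.reverse q t pc' (hmemg' pc' hpc')
    rw [List.length_reverse] at hk
    rw [List.length_reverse, hlen'] at hk'
    have hwdeq : pc.1.2.1 = pc'.1.2.1 := by rw [← hfst]
    have hlwd := congrArg List.length (hwd.symm.trans (hwdeq.trans hwd'))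
    rw [List.length_reverse, List.length_reverse, List.length_drop, List.length_drop,
      List.length_reverse, List.length_reverse, hlen'] at hlwd
    have hkk' : k = k' := by omega
    subst hkk'
    have hjL : L < n - k := by
      have hlt := hlenTC pc' hpc'
      rw [hwd'] at hlt
      rw [List.length_reverse, List.length_drop, List.length_reverse, hlen'] at hlt
      omega
    have hword : w.take (n - k) = w'.take (n - k) := by
      have e1 : (w.reverse.drop k).reverse = w.take (n - k) := by
        have hx := rev_drop_rev w k (by omega)
        rwa [← hn] at hx
      have e2 : (w'.reverse.drop k).reverse = w'.take (n - k) := by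
        have hx := rev_drop_rev w' k (by rw [hlen']; omega)
        rwa [hlen'] at hx
      rw [← e1, ← e2, ← hwd, ← hwd', hwdeq]
    have hstate : (A.derivRun w q).getD (n - k) A.qI = (A.derivRun w' q).getD (n - k) A.qI := by
      have e1 : (A.derivRun w q).getD (n - k) A.qI
          = (A.derivRunRev w.reverse q).getD k A.qI := by
        unfold UNFA.derivRun
        rw [getD_rev _ _ _ (by rw [UNFA.derivRunRev_length, List.length_reverse]; omega)]
        congr 1
        rw [UNFA.derivRunRev_length, List.length_reverse]
        omega
      have e2 : (A.derivRun w' q).getD (n - k) A.qI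
          = (A.derivRunRev w'.reverse q).getD k A.qI := by
        unfold UNFA.derivRun
        rw [getD_rev _ _ _ (by rw [UNFA.derivRunRev_length, List.length_reverse, hlen']; omega)]
        congr 1
        rw [UNFA.derivRunRev_length, List.length_reverse, hlen']
        omega
      rw [e1, e2, ← hst, ← hst', hfst]
    have hPj := UNFA.take_run_eq A (n - k) (by omega) hlen' hword hstate
    have hcontra := hmax (n - k) (by omega) ⟨by rw [hR, hR']; exact hPj, hword⟩
    omega
  -- nodup
  have hndW := UNFA.coinList_nodup A h w.reverse q t
  have hndW' := UNFA.coinList_nodup A h w'.reverse q t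
  have hndT : (((((q, w', true), ((t : ℝ) / (A.rhoH h q : ℝ))) :: g')).map Prod.fst).Nodup := by
    rw [hgE'] at hndW'
    rw [← List.cons_append, List.map_append] at hndW'
    exact (List.nodup_append.1 hndW').1
  have hndF : ((UNFA.coinList A h w.reverse q t ++
      ((((q, w', true), ((t : ℝ) / (A.rhoH h q : ℝ))) :: g'))).map Prod.fst).Nodup := by
    rw [List.map_append]
    exact List.nodup_append.2 ⟨hndW, hndT, fun a ha b hb hab => hdisj ha (by rw [hab]; exact hb)⟩
  -- bounds
  have hbW := UNFA.coinList_bounds A h lvl hlvl0 hlvlstep hpos hle w.reverse q t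
    (by simpa using hw) ht0 htle
  have hbW' := UNFA.coinList_bounds A h lvl hlvl0 hlvlstep hpos hle w'.reverse q t
    (by simpa using hw') ht0 htle
  have hbF : ∀ pc ∈ UNFA.coinList A h w.reverse q t ++
      ((((q, w', true), ((t : ℝ) / (A.rhoH h q : ℝ))) :: g')), 0 ≤ pc.2 ∧ pc.2 ≤ 1 := by
    intro pc hpc
    rcases List.mem_append.1 hpc with hm | hm
    · exact hbW pc hm
    · exact hbW' pc (hmemg' pc hm)
  have hρR : (0:ℝ) < (A.rhoH h q : ℝ) := by exact_mod_cast UNFA.rhoH_pos hpos q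
  have hsσR : (0:ℝ) < (h sσ : ℝ) := by exact_mod_cast hpos sσ
  have htR : (0:ℝ) < (t : ℝ) := by exact_mod_cast ht0
  have hwrne : w.reverse ≠ [] := by
    intro hnil
    have hx : w.reverse.length = 0 := by rw [hnil]; rfl
    rw [List.length_reverse] at hx
    omega
  have hprodW : ((UNFA.coinList A h w.reverse q t).map fun pc => ENNReal.ofReal pc.2).prod
      = ENNReal.ofReal (t : ℝ) := by
    rw [UNFA.coinList_prod A h hpos w.reverse q t (le_of_lt ht0)
      (fun hnil => absurd hnil hwrne)]
    rw [UNFA.derivRunRev_last A w.reverse q (by simpa using hw), hI]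
    norm_num
  have hprodT : (((((q, w', true), ((t : ℝ) / (A.rhoH h q : ℝ))) :: g')).map
      fun pc => ENNReal.ofReal pc.2).prod = ENNReal.ofReal ((t:ℝ) / (h sσ : ℝ)) := by
    simp only [List.map_cons, List.prod_cons]
    rw [hgprod']
    rw [← ENNReal.ofReal_mul (div_nonneg htR.le hρR.le)]
    congr 1
    field_simp
  constructor
  · calc μ ({ω | A.memY U h w q t ω} ∩ {ω | A.memY U h w' q t ω})
        ≤ μ {ω | ∀ pc ∈ UNFA.coinList A h w.reverse q t ++
            ((((q, w', true), ((t : ℝ) / (A.rhoH h q : ℝ))) :: g')), U pc.1 ω ≤ pc.2} := by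
          apply measure_mono
          rw [hEw, hEw']
          rintro ω ⟨h1, h2⟩ pc hpc
          rcases List.mem_append.1 hpc with hm | hm
          · exact h1 pc hm
          · exact h2 pc (hmemg' pc hm)
      _ = ((UNFA.coinList A h w.reverse q t ++
            ((((q, w', true), ((t : ℝ) / (A.rhoH h q : ℝ))) :: g'))).map
            fun pc => ENNReal.ofReal pc.2).prod :=
          meas_coinEvent μ U hUindep hUunif _ hndF hbF
      _ ≤ ENNReal.ofReal ((t:ℝ)^2 / (h sσ : ℝ)) := by
          rw [List.map_append, List.prod_append, hprodW, hprodT,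
            ← ENNReal.ofReal_mul htR.le]
          apply le_of_eq
          congr 1
          rw [pow_two, mul_div_assoc]
  · obtain ⟨b₀, rest₀, hwr⟩ : ∃ b r, w.reverse = b :: r := by
      cases hcase : w.reverse with
      | nil => exact absurd hcase hwrne
      | cons b r => exact ⟨b, r, rfl⟩
    obtain ⟨b₁, rest₁, hwr'⟩ : ∃ b r, w'.reverse = b :: r := by
      cases hcase : w'.reverse with
      | nil =>
          exfalso
          have := congrArg List.length hcase
          simp [hlen'] at this
          omega
      | cons b r => exact ⟨b, r, rfl⟩
    have hEZw : {ω | A.memZ U h w q ω}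
        = {ω | ∀ pc ∈ (UNFA.coinList A h w.reverse q t).tail, U pc.1 ω ≤ pc.2} := by
      ext ω
      simp only [Set.mem_setOf_eq]
      rw [show A.memZ U h w q ω = A.memZrev U h w.reverse q ω from rfl]
      rw [hwr]
      exact UNFA.memZrev_iff A U h b₀ rest₀ q t ω (by rw [← hwr]; simpa using hw)
    have hEZw' : {ω | A.memZ U h w' q ω}
        = {ω | ∀ pc ∈ (UNFA.coinList A h w'.reverse q t).tail, U pc.1 ω ≤ pc.2} := by
      ext ω
      simp only [Set.mem_setOf_eq]
      rw [show A.memZ U h w' q ω = A.memZrev U h w'.reverse q ω from rfl]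
      rw [hwr']
      exact UNFA.memZrev_iff A U h b₁ rest₁ q t ω (by rw [← hwr']; simpa using hw')
    have hmemg'Z : ∀ pc, pc ∈ g' → pc ∈ (UNFA.coinList A h w'.reverse q t).tail := by
      intro pc hpc
      rw [hgE']
      exact List.mem_append_left _ hpc
    have htailsub : ((UNFA.coinList A h w.reverse q t).tail ++ g').Sublist
        (UNFA.coinList A h w.reverse q t ++
          ((((q, w', true), ((t : ℝ) / (A.rhoH h q : ℝ))) :: g'))) :=
      List.Sublist.append (List.tail_sublist _) (List.sublist_cons_self _ _)
    have hndFZ : (((UNFA.coinList A h w.reverse q t).tail ++ g').map Prod.fst).Nodup :=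
      hndF.sublist (htailsub.map Prod.fst)
    have hbFZ : ∀ pc ∈ (UNFA.coinList A h w.reverse q t).tail ++ g', 0 ≤ pc.2 ∧ pc.2 ≤ 1 :=
      fun pc hpc => hbF pc (htailsub.subset hpc)
    have hacc₀ : A.Accepts (rest₀.reverse ++ [b₀]) q := by
      have hx : (b₀ :: rest₀).reverse = rest₀.reverse ++ [b₀] := by simp
      rw [← hx, ← hwr]
      simpa using hw
    have hfp₀ := UNFA.firstPred_spec hacc₀
    have hprodZW : (((UNFA.coinList A h w.reverse q t).tail).map
        fun pc => ENNReal.ofReal pc.2).prod = ENNReal.ofReal ((A.rhoH h q : ℝ)) := by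
      rw [hwr]
      rw [show (UNFA.coinList A h (b₀ :: rest₀) q t).tail =
        ((q, (b₀ :: rest₀).reverse, false),
          ((A.rhoH h q : ℝ) / ((h (A.firstPred q b₀ rest₀.reverse) : ℝ)))) ::
        UNFA.coinList A h rest₀ (A.firstPred q b₀ rest₀.reverse)
          (h (A.firstPred q b₀ rest₀.reverse)) from rfl]
      simp only [List.map_cons, List.prod_cons]
      rw [UNFA.coinList_prod A h hpos rest₀ _ _ (hpos _).le (fun _ => rfl)]
      rw [UNFA.derivRunRev_last A rest₀ _ hfp₀.2, hI]
      have hhp₀ : (0:ℝ) < (h (A.firstPred q b₀ rest₀.reverse) : ℝ) := by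
        exact_mod_cast hpos _
      rw [← ENNReal.ofReal_mul (div_nonneg hρR.le hhp₀.le)]
      congr 1
      field_simp
      norm_num
    calc μ ({ω | A.memZ U h w q ω} ∩ {ω | A.memZ U h w' q ω})
        ≤ μ {ω | ∀ pc ∈ (UNFA.coinList A h w.reverse q t).tail ++ g', U pc.1 ω ≤ pc.2} := by
          apply measure_mono
          rw [hEZw, hEZw']
          rintro ω ⟨h1, h2⟩ pc hpc
          rcases List.mem_append.1 hpc with hm | hm
          · exact h1 pc hm
          · exact h2 pc (hmemg'Z pc hm)
      _ = (((UNFA.coinList A h w.reverse q t).tail ++ g').map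
            fun pc => ENNReal.ofReal pc.2).prod :=
          meas_coinEvent μ U hUindep hUunif _ hndFZ hbFZ
      _ ≤ ENNReal.ofReal ((A.rhoH h q : ℝ)^2 / (h sσ : ℝ)) := by
          rw [List.map_append, List.prod_append, hprodZW, hgprod',
            ← ENNReal.ofReal_mul hρR.le]
          apply le_of_eq
          congr 1
          rw [pow_two, mul_div_assoc]
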